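/- Let W, V be antisymmetric n×n complex matrices and suppose every element of the kernel of the map X ↦ XW + WX is symmetric. Then there exists a symmetric matrix T with TW + WT = V. -/

import Mathlib

open Matrix

section Aux

variable {n : ℕ}

private lemma trace_mul_stdBasisMatrix' (M : Matrix (Fin n) (Fin n) ℂ) (i j : Fin n) :
    trace (M * single j i 1) = M i j := by
  simp [trace, diag, mul_apply, single, ite_and, Finset.sum_ite_eq, Finset.sum_ite_eq']

private lemma eq_zero_of_trace_mul (M : Matrix (Fin n) (Fin n) ℂ)
    (h : ∀ X, trace (M * X) = 0) : M = 0 := by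
  ext i j
  have := h (single j i 1)
  rw [trace_mul_stdBasisMatrix'] at this
  simpa using this

private lemma dual_rep (f : Module.Dual ℂ (Matrix (Fin n) (Fin n) ℂ))
    (Y : Matrix (Fin n) (Fin n) ℂ) :
    f Y = trace ((of fun i j => f (single i j 1))ᵀ * Y) := by
  set Z : Matrix (Fin n) (Fin n) ℂ := of fun i j => f (single i j 1) with hZ
  have h1 : f Y = ∑ i, ∑ j, Y i j * Z i j := by
    conv_lhs => rw [matrix_eq_sum_single Y]
    rw [map_sum]
    refine Finset.sum_congr rfl fun i _ => ?_
    rw [map_sum]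
    refine Finset.sum_congr rfl fun j _ => ?_
    have : single i j (Y i j) = (Y i j) • single i j 1 := by
      rw [smul_single, smul_eq_mul, mul_one]
    rw [this, _root_.map_smul, smul_eq_mul]
    rfl
  rw [h1, trace]
  rw [Finset.sum_comm]
  simp [diag, mul_apply, mul_comm]

end Aux

/-- If `W`, `V` are antisymmetric complex matrices and every element of the kernel
of `X ↦ XW + WX` is symmetric, then there exists a symmetric `T` with
`TW + WT = V`. -/
theorem exists_symmetric_solution_of_sylvester (n : ℕ)
    (W V : Matrix (Fin n) (Fin n) ℂ)
    (hW : Wᵀ = -W) (hV : Vᵀ = -V)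
    (hker : ∀ X : Matrix (Fin n) (Fin n) ℂ, X * W + W * X = 0 → Xᵀ = X) :
    ∃ T : Matrix (Fin n) (Fin n) ℂ, Tᵀ = T ∧ T * W + W * T = V := by
  set L : Matrix (Fin n) (Fin n) ℂ →ₗ[ℂ] Matrix (Fin n) (Fin n) ℂ :=
    { toFun := fun X => X * W + W * X
      map_add' := by intro X Y; simp [add_mul, mul_add]; abel
      map_smul' := by intro c X; simp [smul_add, mul_smul_comm, smul_mul_assoc] }
  have hVmem : V ∈ LinearMap.range L := by
    by_contra hV'
    obtain ⟨f, hfV, hfmap⟩ :=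
      Submodule.exists_dual_map_eq_bot_of_notMem hV' inferInstance
    have hf0 : ∀ X : Matrix (Fin n) (Fin n) ℂ, f (X * W + W * X) = 0 := by
      intro X
      have hmem : f (L X) ∈ (LinearMap.range L).map f :=
        Submodule.mem_map_of_mem (LinearMap.mem_range_self L X)
      rw [hfmap, Submodule.mem_bot] at hmem
      exact hmem
    set Z : Matrix (Fin n) (Fin n) ℂ := of fun i j => f (single i j 1) with hZ
    have hrep : ∀ Y, f Y = trace (Zᵀ * Y) := fun Y => dual_rep f Y
    have key : ∀ X : Matrix (Fin n) (Fin n) ℂ,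
        trace ((W * Zᵀ + Zᵀ * W) * X) = 0 := by
      intro X
      have h0 := hf0 X
      rw [hrep] at h0
      have hcalc : trace (Zᵀ * (X * W + W * X)) = trace ((W * Zᵀ + Zᵀ * W) * X) := by
        rw [mul_add, trace_add, add_mul, trace_add]
        congr 1
        · rw [← mul_assoc, trace_mul_comm, mul_assoc]
        · rw [← mul_assoc]
      rw [hcalc] at h0
      exact h0
    have hZker : Zᵀ * W + W * Zᵀ = 0 := by
      have h1 := eq_zero_of_trace_mul _ key
      calc Zᵀ * W + W * Zᵀ = W * Zᵀ + Zᵀ * W := by abel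
        _ = 0 := h1
    have hZsymm : Zᵀ = Z := by
      have := hker Zᵀ hZker
      rw [transpose_transpose] at this
      exact this.symm
    have hfV0 : f V = 0 := by
      rw [hrep, hZsymm]
      have h1 : trace (Z * V) = - trace (Z * V) := by
        conv_lhs => rw [← trace_transpose (Z * V)]
        rw [transpose_mul, hV, hZsymm, neg_mul, trace_neg, trace_mul_comm]
      have h2 : (2 : ℂ) * trace (Z * V) = 0 := by linear_combination h1
      simpa using h2
    exact hfV hfV0
  obtain ⟨X, hX⟩ := hVmem
  have hXV : X * W + W * X = V := hX
  have hXt : Xᵀ * W + W * Xᵀ = V := by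
    have h2 := congrArg transpose hXV
    rw [transpose_add, transpose_mul, transpose_mul, hW, hV] at h2
    have h3 : -(Xᵀ * W + W * Xᵀ) = -V := by
      rw [neg_add]
      calc -(Xᵀ * W) + -(W * Xᵀ) = Xᵀ * -W + -W * Xᵀ := by
            rw [mul_neg, neg_mul]
        _ = -W * Xᵀ + Xᵀ * -W := by abel
        _ = -V := h2
    exact neg_inj.mp h3
  refine ⟨(2 : ℂ)⁻¹ • (X + Xᵀ), ?_, ?_⟩
  · rw [transpose_smul, transpose_add, transpose_transpose, add_comm]
  · rw [smul_mul_assoc, mul_smul_comm, ← smul_add, add_mul, mul_add]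
    have : X * W + Xᵀ * W + (W * X + W * Xᵀ) = (2 : ℂ) • V := by
      have : X * W + Xᵀ * W + (W * X + W * Xᵀ)
          = (X * W + W * X) + (Xᵀ * W + W * Xᵀ) := by abel
      rw [this, hXV, hXt, two_smul]
    rw [this, smul_smul]
    norm_num
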